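/- Let p be an odd prime and let a ∈ ℚ_p. Then a belongs to ℤ_p (i.e. the p-adic valuation of a is ≥ 0) if and only if 1 + p·a² is a square in ℚ_p. -/

import Mathlib

/-- For an odd prime p, a ∈ ℚ_p lies in ℤ_p iff 1 + p·a² is a square in ℚ_p. -/
theorem stmt_9 (p : ℕ) [Fact p.Prime] (hp : Odd p) (a : ℚ_[p]) :
    ‖a‖ ≤ 1 ↔ IsSquare (1 + (p : ℚ_[p]) * a ^ 2) := by
  have hp1 : (1:ℝ) < p := by exact_mod_cast (Fact.out : p.Prime).one_lt
  have hp0 : (0:ℝ) < p := lt_trans one_pos hp1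
  constructor
  · intro ha
    -- norm of p * a^2 is < 1
    have hsmall : ‖(p : ℚ_[p]) * a ^ 2‖ < 1 := by
      rw [norm_mul, norm_pow, Padic.norm_p]
      calc (p:ℝ)⁻¹ * ‖a‖ ^ 2 ≤ (p:ℝ)⁻¹ * 1 := by
            gcongr
            exact pow_le_one₀ (norm_nonneg a) ha
        _ < 1 := by rw [mul_one]; exact inv_lt_one_of_one_lt₀ hp1
    have hle : ‖(1 : ℚ_[p]) + (p : ℚ_[p]) * a ^ 2‖ ≤ 1 :=
      le_trans (Padic.nonarchimedean _ _) (max_le (le_of_eq norm_one) hsmall.le)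
    set c : ℤ_[p] := ⟨1 + (p : ℚ_[p]) * a ^ 2, hle⟩ with hc
    have hc1 : ‖c - 1‖ < 1 := by
      have : ((c - 1 : ℤ_[p]) : ℚ_[p]) = (p : ℚ_[p]) * a ^ 2 := by
        rw [PadicInt.coe_sub, PadicInt.coe_one]
        show (1 + (p : ℚ_[p]) * a ^ 2) - 1 = _
        ring
      rw [PadicInt.norm_def, this]
      exact hsmall
    -- Hensel's lemma for X^2 - c at 1
    have h2 : ‖(2 : ℤ_[p])‖ = 1 := by
      have hnd : ¬ (p : ℤ) ∣ 2 := by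
        intro h
        have h2 : p ∣ 2 := by exact_mod_cast h
        have hpe : p = 2 := (Nat.prime_dvd_prime_iff_eq Fact.out Nat.prime_two).mp h2
        rw [hpe] at hp
        exact absurd hp (by norm_num)
      have := (PadicInt.norm_int_lt_one_iff_dvd (2:ℤ)).not.mpr (by exact_mod_cast hnd)
      have hle2 : ‖((2:ℤ) : ℤ_[p])‖ ≤ 1 := PadicInt.norm_le_one _
      push_neg at this
      have : ‖((2:ℤ) : ℤ_[p])‖ = 1 := le_antisymm hle2 this
      simpa using this
    obtain ⟨z, hz, -⟩ := hensels_lemma (p := p) (F := Polynomial.X ^ 2 - Polynomial.C c) (a := 1)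
      (by
        have hd : (Polynomial.X ^ 2 - Polynomial.C c).derivative = Polynomial.C 2 * Polynomial.X := by
          simp [Polynomial.derivative_pow]
        simp only [hd, Polynomial.aeval_X, Polynomial.aeval_C, map_sub, map_pow, map_mul, Algebra.algebraMap_self, RingHom.id_apply, Polynomial.eval_mul, Polynomial.eval_C, Polynomial.eval_X,
          Polynomial.eval_sub, Polynomial.eval_pow, one_pow, mul_one, norm_mul, h2, one_mul]
        have : ‖(1 : ℤ_[p]) - c‖ = ‖c - 1‖ := by rw [← norm_neg, neg_sub]
        rw [this]
        simpa using hc1)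
    refine ⟨(z : ℚ_[p]), ?_⟩
    have hz2 : z ^ 2 = c := by
      have := hz
      simp only [Polynomial.aeval_X, Polynomial.aeval_C, map_sub, map_pow, map_mul, Algebra.algebraMap_self, RingHom.id_apply, Polynomial.eval_sub, Polynomial.eval_pow, Polynomial.eval_X,
        Polynomial.eval_C, sub_eq_zero] at this
      exact this
    have : ((z ^ 2 : ℤ_[p]) : ℚ_[p]) = 1 + (p : ℚ_[p]) * a ^ 2 := by rw [hz2]
    push_cast at this
    rw [← this]; ring
  · rintro ⟨r, hr⟩
    by_contra ha
    push_neg at ha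
    have ha0 : a ≠ 0 := by
      intro h; rw [h] at ha; simp at ha; linarith
    have hpa : ‖(p : ℚ_[p]) * a ^ 2‖ = (p:ℝ) ^ (-(1 + 2 * a.valuation)) := by
      rw [norm_mul, norm_pow, Padic.norm_p, Padic.norm_eq_zpow_neg_valuation ha0]
      rw [← zpow_natCast, ← zpow_mul]
      rw [show ((p:ℝ))⁻¹ = (p:ℝ) ^ (-1 : ℤ) by simp]
      rw [← zpow_add₀ (ne_of_gt hp0)]
      ring_nf
    have hgt : (1:ℝ) < ‖(p : ℚ_[p]) * a ^ 2‖ := by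
      rw [norm_mul, norm_pow, Padic.norm_p]
      have hv : a.valuation ≤ -1 := by
        by_contra hv
        push_neg at hv
        have h0 : 0 ≤ a.valuation := by omega
        exact absurd ((Padic.norm_le_one_iff_val_nonneg a).mpr h0) (not_le.mpr ha)
      have h2 : (p:ℝ) ≤ ‖a‖ := by
        rw [Padic.norm_eq_zpow_neg_valuation ha0]
        calc (p:ℝ) = (p:ℝ) ^ (1:ℤ) := by simp
          _ ≤ (p:ℝ) ^ (-a.valuation) := by
              apply zpow_le_zpow_right₀ hp1.le
              omega
      calc (1:ℝ) < (p:ℝ)⁻¹ * ((p:ℝ) * (p:ℝ)) := by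
            rw [inv_mul_cancel_left₀ (ne_of_gt hp0)]; exact hp1
        _ ≤ (p:ℝ)⁻¹ * (‖a‖ ^ 2) := by
            have hsq : (p:ℝ) * (p:ℝ) ≤ ‖a‖ ^ 2 := by
              rw [sq]; exact mul_le_mul h2 h2 hp0.le (norm_nonneg a)
            exact mul_le_mul_of_nonneg_left hsq (inv_nonneg.mpr hp0.le)
    have hne : ‖(1 : ℚ_[p])‖ ≠ ‖(p : ℚ_[p]) * a ^ 2‖ := by
      rw [norm_one]; exact ne_of_lt hgt
    have hnorm : ‖(1 : ℚ_[p]) + (p : ℚ_[p]) * a ^ 2‖ = ‖(p : ℚ_[p]) * a ^ 2‖ := by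
      rw [Padic.add_eq_max_of_ne hne, norm_one, max_eq_right hgt.le]
    have hr0 : r ≠ 0 := by
      intro h
      rw [h, mul_zero] at hr
      rw [hr] at hnorm
      simp only [norm_zero] at hnorm
      rw [← hnorm] at hgt; linarith
    have hrr : ‖r * r‖ = (p:ℝ) ^ (-(2 * r.valuation)) := by
      rw [norm_mul, Padic.norm_eq_zpow_neg_valuation hr0, ← zpow_add₀ (ne_of_gt hp0)]
      ring_nf
    rw [hr, hrr, hpa] at hnorm
    have := zpow_right_injective₀ hp0 (ne_of_gt hp1) hnorm
    omega
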